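/- Let $f : \mathbb{F}_2^n \to \{-1,1\}$ be computed by a complete binary decision tree of depth $d$ with distinct variables at all $n = 2^d - 1$ internal nodes, where the leaf reached by setting the last-queried variable to $b$ has label $(-1)^{1-b}$ (i.e., $-1$ for $b=0$ and $1$ for $b=1$). Then the Fourier support of $f$ is $\mathrm{supp}(\hat f) = \bigcup_{i \in [2^d]} \{ s \subseteq P_i : \N(i) \in s \}$, where $P_i$ is the set of internal nodes on the root-to-leaf path to leaf $i$ and $\N(i)$ is the internal node adjacent to leaf $i$, and subsets $s \subseteq [n]$ are identified with their characteristic vectors in $\mathbb{F}_2^n$. -/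

import Mathlib

/-- One step down the complete binary decision tree (nodes numbered `0, 1, 2, …`
in heap order, root `0`, children of `v` are `2v+1` and `2v+2`). -/
def treeStep {n : ℕ} (x : Fin n → ZMod 2) (v : ℕ) : ℕ :=
  2 * v + 1 + (if h : v < n then (x ⟨v, h⟩).val else 0)

/-- The leaf reached on input `x` by the complete binary decision tree of depth `d`. -/
def leafOf (d : ℕ) {n : ℕ} (x : Fin n → ZMod 2) : ℕ := (treeStep x)^[d] 0

/-- Leaf `2v+1+b` has label `(-1)^{1-b}`: `-1` for `b = 0` (odd `L`), `1` for `b = 1`. -/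
def signL (L : ℕ) : ℝ := if L % 2 = 0 then 1 else -1

/-- The function computed by the complete binary decision tree of depth `d`. -/
def treeFun (d : ℕ) (x : Fin (2 ^ d - 1) → ZMod 2) : ℝ := signL (leafOf d x)

/-- Parent of a node in heap numbering. -/
def parentN (v : ℕ) : ℕ := (v - 1) / 2

/-- The standard bilinear form on `𝔽₂ⁿ`. -/
def ip {n : ℕ} (x y : Fin n → ZMod 2) : ZMod 2 := ∑ i, x i * y i

/-- Fourier coefficient `f̂(α) = 𝔼ₓ[f(x)(-1)^⟨x,α⟩]`. -/
noncomputable def fhat {n : ℕ} (f : (Fin n → ZMod 2) → ℝ) (α : Fin n → ZMod 2) : ℝ :=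
  (∑ x : Fin n → ZMod 2, f x * (-1 : ℝ) ^ (ip x α).val) / 2 ^ n

/-- `α` (viewed as a subset of the internal nodes) is a subset of the path `P_L`
to some leaf `L` and contains the node `N(L) = parentN L` adjacent to `L`. -/
def inSupp (d : ℕ) (α : Fin (2 ^ d - 1) → ZMod 2) : Prop :=
  ∃ L : ℕ, 2 ^ d - 1 ≤ L ∧ L < 2 ^ (d + 1) - 1 ∧
    (∀ v : Fin (2 ^ d - 1), α v ≠ 0 →
        ∃ j, 1 ≤ j ∧ j ≤ d ∧ parentN^[j] L = (v : ℕ)) ∧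
    (∃ v : Fin (2 ^ d - 1), (v : ℕ) = parentN L ∧ α v ≠ 0)

def delta {n : ℕ} (i : Fin n) : Fin n → ZMod 2 := fun j => if j = i then 1 else 0

lemma zmod2_cases (a : ZMod 2) : a = 0 ∨ a = 1 := by revert a; decide

lemma div_eq_of_between {m q a : ℕ} (hm : 0 < m) (h1 : m * q ≤ a) (h2 : a < m * (q + 1)) :
    a / m = q := by
  have h2' : a < (q + 1) * m := by rw [Nat.mul_comm]; exact h2
  have h1' : q * m ≤ a := by rw [Nat.mul_comm]; exact h1
  refine le_antisymm ?_ ((Nat.le_div_iff_mul_le hm).mpr h1')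
  have := (Nat.div_lt_iff_lt_mul hm).mpr h2'
  omega

lemma pow2_pos (k : ℕ) : 0 < 2 ^ k := Nat.pow_pos (by norm_num)

lemma parentN_iter (j x : ℕ) : parentN^[j] x = (x + 1) / 2 ^ j - 1 := by
  induction j generalizing x with
  | zero => simp
  | succ j ih =>
    rw [Function.iterate_succ_apply, ih]
    rcases Nat.eq_zero_or_pos x with hx | hx
    · subst hx
      have h0 : parentN 0 = 0 := by show (0-1)/2 = 0; omega
      rw [h0]
      have h1 : (0 + 1) / 2 ^ j ≤ 1 := Nat.div_le_self _ _
      have h2 : (0 + 1) / 2 ^ (j + 1) ≤ 1 := Nat.div_le_self _ _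
      omega
    · have h1 : parentN x + 1 = (x + 1) / 2 := by show (x-1)/2 + 1 = (x+1)/2; omega
      rw [h1, Nat.div_div_eq_div_mul, ← pow_succ']

lemma anc_range {k j L u w : ℕ} (hL1 : 2 ^ k * (u + 1) ≤ L + 1) (hL2 : L + 1 < 2 ^ k * (u + 2))
    (hjk : j ≤ k) (hw : parentN^[j] L = w) :
    2 ^ (k - j) * (u + 1) ≤ w + 1 ∧ w + 1 < 2 ^ (k - j) * (u + 2) ∧ (L + 1) / 2 ^ j = w + 1 := by
  have hpow : 2 ^ (k - j) * 2 ^ j = 2 ^ k := by rw [← pow_add]; congr 1; omega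
  have hlow : 2 ^ (k - j) * (u + 1) ≤ (L + 1) / 2 ^ j := by
    rw [Nat.le_div_iff_mul_le (pow2_pos j)]
    calc 2 ^ (k - j) * (u + 1) * 2 ^ j = 2 ^ k * (u + 1) := by rw [Nat.mul_right_comm, hpow]
    _ ≤ L + 1 := hL1
  have hhigh : (L + 1) / 2 ^ j < 2 ^ (k - j) * (u + 2) := by
    rw [Nat.div_lt_iff_lt_mul (pow2_pos j)]
    calc L + 1 < 2 ^ k * (u + 2) := hL2
    _ = 2 ^ (k - j) * (u + 2) * 2 ^ j := by rw [Nat.mul_right_comm, hpow]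
  have h1 : 1 ≤ (L + 1) / 2 ^ j := le_trans (by nlinarith [pow2_pos (k - j)]) hlow
  rw [parentN_iter] at hw
  refine ⟨?_, ?_, ?_⟩ <;> omega

-- disjointness of sibling subtrees
lemma desc_disjoint {v w : ℕ}
    (h1 : ∃ i, 2 ^ i * (2 * v + 2) ≤ w + 1 ∧ w + 1 < 2 ^ i * (2 * v + 3))
    (h2 : ∃ i, 2 ^ i * (2 * v + 3) ≤ w + 1 ∧ w + 1 < 2 ^ i * (2 * v + 4)) : False := by
  obtain ⟨i1, ha1, hb1⟩ := h1
  obtain ⟨i2, ha2, hb2⟩ := h2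
  rcases le_or_gt i1 i2 with h | h
  · have : 2 ^ i1 * (2 * v + 3) ≤ 2 ^ i2 * (2 * v + 3) :=
      Nat.mul_le_mul_right _ (Nat.pow_le_pow_right (by norm_num) h)
    omega
  · have h' : 2 ^ (i2 + 1) * (2 * v + 2) ≤ 2 ^ i1 * (2 * v + 2) :=
      Nat.mul_le_mul_right _ (Nat.pow_le_pow_right (by norm_num) h)
    have h'' : 2 ^ (i2 + 1) * (2 * v + 2) = 2 ^ i2 * (4 * v + 4) := by ring
    have h''' : 2 ^ i2 * (2 * v + 4) ≤ 2 ^ i2 * (4 * v + 4) :=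
      Nat.mul_le_mul_left _ (by omega)
    omega


lemma zmod_val_simp : ((0 : ZMod 2)).val = 0 ∧ ((1 : ZMod 2)).val = 1 ∧ ((2 : ZMod 2)).val = 0 ∧
    ((1 : ZMod 2) + 1) = 0 := by decide

lemma sign_add (a b : ZMod 2) : ((-1 : ℝ)) ^ ((a + b).val) = (-1) ^ a.val * (-1) ^ b.val := by
  rcases zmod2_cases a with h | h <;> rcases zmod2_cases b with h' | h' <;>
    subst h <;> subst h' <;> norm_num [zmod_val_simp.1, zmod_val_simp.2.1, zmod_val_simp.2.2.1, zmod_val_simp.2.2.2]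

lemma neg_one_val_one : ((-1 : ℝ)) ^ ((1 : ZMod 2)).val = -1 := by
  rw [zmod_val_simp.2.1]; norm_num

lemma ip_add_right {n : ℕ} (x α β : Fin n → ZMod 2) : ip x (α + β) = ip x α + ip x β := by
  unfold ip
  rw [← Finset.sum_add_distrib]
  exact Finset.sum_congr rfl fun i _ => by simp [mul_add]

lemma ip_delta_right {n : ℕ} (x : Fin n → ZMod 2) (i : Fin n) : ip x (delta i) = x i := by
  unfold ip delta
  rw [Finset.sum_eq_single i] <;> simp +contextual

lemma ip_add_left {n : ℕ} (x y α : Fin n → ZMod 2) : ip (x + y) α = ip x α + ip y α := by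
  unfold ip
  rw [← Finset.sum_add_distrib]
  exact Finset.sum_congr rfl fun i _ => by simp [add_mul]

lemma ip_delta_left {n : ℕ} (i : Fin n) (α : Fin n → ZMod 2) : ip (delta i) α = α i := by
  unfold ip delta
  rw [Finset.sum_eq_single i] <;> simp +contextual

/-- The key involution trick: if `g` is invariant under flipping coordinate `i`
and `α i ≠ 0` then the correlation sum vanishes. -/
lemma sum_shift_zero {n : ℕ} (g : (Fin n → ZMod 2) → ℝ) (α : Fin n → ZMod 2) (i : Fin n)
    (hi : α i ≠ 0) (hg : ∀ x, g (x + delta i) = g x) :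
    (∑ x : Fin n → ZMod 2, g x * (-1 : ℝ) ^ (ip x α).val) = 0 := by
  have hαi : α i = 1 := (zmod2_cases (α i)).resolve_left hi
  have key : ∀ x : Fin n → ZMod 2,
      g (x + delta i) * (-1 : ℝ) ^ (ip (x + delta i) α).val = -(g x * (-1) ^ (ip x α).val) := by
    intro x
    rw [hg, ip_add_left, ip_delta_left, hαi, sign_add, neg_one_val_one]
    ring
  have h1 : (∑ x : Fin n → ZMod 2, g x * (-1 : ℝ) ^ (ip x α).val)
      = ∑ x : Fin n → ZMod 2, g (x + delta i) * (-1 : ℝ) ^ (ip (x + delta i) α).val :=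
    (Fintype.sum_equiv (Equiv.addRight (delta i))
      (fun x => g (x + delta i) * (-1 : ℝ) ^ (ip (x + delta i) α).val)
      (fun x => g x * (-1 : ℝ) ^ (ip x α).val) (fun x => rfl)).symm
  have h2 : (∑ x : Fin n → ZMod 2, g x * (-1 : ℝ) ^ (ip x α).val)
      = -∑ x : Fin n → ZMod 2, g x * (-1 : ℝ) ^ (ip x α).val := by
    calc (∑ x : Fin n → ZMod 2, g x * (-1 : ℝ) ^ (ip x α).val)
        = ∑ x : Fin n → ZMod 2, g (x + delta i) * (-1 : ℝ) ^ (ip (x + delta i) α).val := h1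
      _ = ∑ x : Fin n → ZMod 2, -(g x * (-1 : ℝ) ^ (ip x α).val) :=
          Finset.sum_congr rfl fun x _ => key x
      _ = -∑ x : Fin n → ZMod 2, g x * (-1 : ℝ) ^ (ip x α).val := by
          rw [Finset.sum_neg_distrib]
  linarith

/-- Function computed by the depth-`k` subtree rooted at `v`. -/
def G {n : ℕ} (k v : ℕ) (x : Fin n → ZMod 2) : ℝ := signL ((treeStep x)^[k] v)

lemma treeStep_ge {n : ℕ} (x : Fin n → ZMod 2) (v : ℕ) : v ≤ treeStep x v := by
  unfold treeStep; omega

lemma treeStep_shift {n : ℕ} (x : Fin n → ZMod 2) (i : Fin n) (v : ℕ) (hvi : (i : ℕ) ≠ v) :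
    treeStep (x + delta i) v = treeStep x v := by
  unfold treeStep
  congr 1
  split
  · next h =>
    have : (x + delta i) ⟨v, h⟩ = x ⟨v, h⟩ := by
      show x _ + delta i _ = x _
      have : delta i ⟨v, h⟩ = 0 := by
        unfold delta
        rw [if_neg]
        intro hc
        exact hvi (by rw [← hc])
      rw [this, add_zero]
    rw [this]
  · rfl

lemma G_shift {n : ℕ} (k u : ℕ) (i : Fin n) (hiu : (i : ℕ) < u) (x : Fin n → ZMod 2) :
    G k u (x + delta i) = G k u x := by
  unfold G
  congr 1
  have aux : ∀ m, u ≤ m → (treeStep (x + delta i))^[k] m = (treeStep x)^[k] m := by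
    induction k with
    | zero => intro m _; simp
    | succ k ih =>
      intro m hm
      rw [Function.iterate_succ_apply, Function.iterate_succ_apply,
        treeStep_shift x i m (by omega)]
      exact ih _ (le_trans hm (treeStep_ge x m))
  exact aux u le_rfl

lemma G_succ {n : ℕ} (k v : ℕ) (hv : v < n) (x : Fin n → ZMod 2) :
    G (k + 1) v x = (1 + (-1 : ℝ) ^ ((x ⟨v, hv⟩).val)) / 2 * G k (2 * v + 1) x
      + (1 - (-1 : ℝ) ^ ((x ⟨v, hv⟩).val)) / 2 * G k (2 * v + 2) x := by
  unfold G
  rw [Function.iterate_succ_apply]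
  have hts : treeStep x v = 2 * v + 1 + (x ⟨v, hv⟩).val := by unfold treeStep; rw [dif_pos hv]
  rcases zmod2_cases (x ⟨v, hv⟩) with h | h <;> rw [hts, h] <;>
    simp [show ((0 : ZMod 2)).val = 0 from rfl, show ((1 : ZMod 2)).val = 1 from rfl]


/-- Correlation sum notation. -/
noncomputable def SS {n : ℕ} (g : (Fin n → ZMod 2) → ℝ) (α : Fin n → ZMod 2) : ℝ :=
  ∑ x : Fin n → ZMod 2, g x * (-1 : ℝ) ^ (ip x α).val

lemma SS_G_succ {n : ℕ} (k v : ℕ) (hv : v < n) (α : Fin n → ZMod 2) :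
    SS (G (k + 1) v) α
      = (SS (G k (2 * v + 1)) α + SS (G k (2 * v + 1)) (α + delta ⟨v, hv⟩)
        + SS (G k (2 * v + 2)) α - SS (G k (2 * v + 2)) (α + delta ⟨v, hv⟩)) / 2 := by
  have hpt : ∀ x : Fin n → ZMod 2,
      G (k + 1) v x * (-1 : ℝ) ^ (ip x α).val
        = (G k (2 * v + 1) x * (-1 : ℝ) ^ (ip x α).val
          + G k (2 * v + 1) x * (-1 : ℝ) ^ (ip x (α + delta ⟨v, hv⟩)).val
          + G k (2 * v + 2) x * (-1 : ℝ) ^ (ip x α).val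
          - G k (2 * v + 2) x * (-1 : ℝ) ^ (ip x (α + delta ⟨v, hv⟩)).val) / 2 := by
    intro x
    have hε : (-1 : ℝ) ^ (ip x (α + delta ⟨v, hv⟩)).val
        = (-1 : ℝ) ^ (ip x α).val * (-1 : ℝ) ^ ((x ⟨v, hv⟩).val) := by
      rw [ip_add_right, ip_delta_right, sign_add]
    rw [G_succ k v hv x, hε]
    ring
  unfold SS
  rw [Finset.sum_congr rfl fun x _ => hpt x, ← Finset.sum_div, Finset.sum_sub_distrib,
    Finset.sum_add_distrib, Finset.sum_add_distrib]

lemma G_one {n : ℕ} (v : ℕ) (hv : v < n) (x : Fin n → ZMod 2) :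
    G 1 v x = -(-1 : ℝ) ^ ((x ⟨v, hv⟩).val) := by
  unfold G
  rw [Function.iterate_one]
  have hts : treeStep x v = 2 * v + 1 + (x ⟨v, hv⟩).val := by unfold treeStep; rw [dif_pos hv]
  rcases zmod2_cases (x ⟨v, hv⟩) with h | h <;> rw [hts, h]
  · rw [show ((0 : ZMod 2)).val = 0 from rfl]
    unfold signL
    rw [if_neg (by omega)]
    norm_num
  · rw [show ((1 : ZMod 2)).val = 1 from rfl]
    unfold signL
    rw [if_pos (by omega)]
    norm_num

lemma card_cube (n : ℕ) : (Finset.univ : Finset (Fin n → ZMod 2)).card = 2 ^ n := by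
  simp [Finset.card_univ, ZMod.card]

lemma SS_G_one_delta {n : ℕ} (v : ℕ) (hv : v < n) :
    SS (G 1 v) (delta ⟨v, hv⟩) = -(2 ^ n : ℝ) := by
  unfold SS
  have hpt : ∀ x : Fin n → ZMod 2,
      G 1 v x * (-1 : ℝ) ^ (ip x (delta ⟨v, hv⟩)).val = -1 := by
    intro x
    rw [G_one v hv x, ip_delta_right]
    rcases zmod2_cases (x ⟨v, hv⟩) with h | h <;> rw [h] <;>
      simp [show ((0 : ZMod 2)).val = 0 from rfl, show ((1 : ZMod 2)).val = 1 from rfl]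
  rw [Finset.sum_congr rfl fun x _ => hpt x, Finset.sum_const, card_cube]
  simp

lemma SS_G_one_ne {n : ℕ} (v : ℕ) (hv : v < n) (α : Fin n → ZMod 2)
    (hα : α ≠ delta ⟨v, hv⟩) : SS (G 1 v) α = 0 := by
  have hβ : α + delta ⟨v, hv⟩ ≠ 0 := by
    intro hc
    apply hα
    have hdd : delta ⟨v, hv⟩ + delta ⟨v, hv⟩ = 0 := by
      funext j
      show delta ⟨v, hv⟩ j + delta ⟨v, hv⟩ j = 0
      exact CharTwo.add_self_eq_zero _
    have : α + delta ⟨v, hv⟩ + delta ⟨v, hv⟩ = delta ⟨v, hv⟩ := by rw [hc, zero_add]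
    rwa [add_assoc, hdd, add_zero] at this
  obtain ⟨i, hi⟩ := Function.ne_iff.mp hβ
  have hpt : ∀ x : Fin n → ZMod 2,
      G 1 v x * (-1 : ℝ) ^ (ip x α).val
        = (-1 : ℝ) * (-1 : ℝ) ^ (ip x (α + delta ⟨v, hv⟩)).val := by
    intro x
    rw [G_one v hv x, ip_add_right, ip_delta_right, sign_add]
    ring
  unfold SS
  rw [Finset.sum_congr rfl fun x _ => hpt x]
  exact sum_shift_zero (fun _ => (-1 : ℝ)) _ i (by simpa using hi) (fun _ => rfl)

def chainCond (k v : ℕ) {n : ℕ} (α : Fin n → ZMod 2) : Prop :=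
  ∃ L : ℕ, 2 ^ k * (v + 1) - 1 ≤ L ∧ L < 2 ^ k * (v + 2) - 1 ∧
    (∀ w : Fin n, α w ≠ 0 → ∃ j, 1 ≤ j ∧ j ≤ k ∧ parentN^[j] L = (w : ℕ)) ∧
    (∃ w : Fin n, (w : ℕ) = parentN L ∧ α w ≠ 0)

lemma chain_range_iff (k v L : ℕ) :
    (2 ^ k * (v + 1) - 1 ≤ L ∧ L < 2 ^ k * (v + 2) - 1)
      ↔ (2 ^ k * (v + 1) ≤ L + 1 ∧ L + 1 < 2 ^ k * (v + 2)) := by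
  have h1 : 0 < 2 ^ k * (v + 1) := Nat.mul_pos (pow2_pos k) (by omega)
  have h2 : 2 ^ k * (v + 1) ≤ 2 ^ k * (v + 2) := Nat.mul_le_mul_left _ (by omega)
  omega

lemma delta_ne {n : ℕ} {i w : Fin n} (h : w ≠ i) (α : Fin n → ZMod 2) :
    (α + delta i) w = α w := by
  show α w + delta i w = α w
  simp [delta, h]

lemma delta_eq {n : ℕ} (i : Fin n) (α : Fin n → ZMod 2) : (α + delta i) i = α i + 1 := by
  show α i + delta i i = α i + 1
  simp [delta]

lemma chain_supp_desc {n : ℕ} {k u : ℕ} {α : Fin n → ZMod 2} (h : chainCond k u α) :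
    ∀ w : Fin n, α w ≠ 0 →
      ∃ i, 2 ^ i * (u + 1) ≤ (w : ℕ) + 1 ∧ (w : ℕ) + 1 < 2 ^ i * (u + 2) := by
  obtain ⟨L, r1, r2, hall, -⟩ := h
  obtain ⟨hr1, hr2⟩ := (chain_range_iff k u L).mp ⟨r1, r2⟩
  intro w hw
  obtain ⟨j, hj1, hjk, hjw⟩ := hall w hw
  obtain ⟨h1, h2, -⟩ := anc_range hr1 hr2 hjk hjw
  exact ⟨k - j, h1, h2⟩

lemma chain_disjoint {n : ℕ} {k v : ℕ} {α : Fin n → ZMod 2}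
    (hL : chainCond k (2 * v + 1) α) (hR : chainCond k (2 * v + 2) α) : False := by
  obtain ⟨L, -, -, -, w0, hw0, hw0ne⟩ := id hL
  obtain ⟨i1, ha1, hb1⟩ := chain_supp_desc hL w0 hw0ne
  obtain ⟨i2, ha2, hb2⟩ := chain_supp_desc hR w0 hw0ne
  rw [show 2 * v + 1 + 1 = 2 * v + 2 from by omega] at ha1
  rw [show 2 * v + 1 + 2 = 2 * v + 3 from by omega] at hb1
  rw [show 2 * v + 2 + 1 = 2 * v + 3 from by omega] at ha2
  rw [show 2 * v + 2 + 2 = 2 * v + 4 from by omega] at hb2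
  exact desc_disjoint ⟨i1, ha1, hb1⟩ ⟨i2, ha2, hb2⟩

lemma chain_base {n : ℕ} (v : ℕ) (hv : v < n) (α : Fin n → ZMod 2) :
    chainCond 1 v α ↔ α = delta ⟨v, hv⟩ := by
  constructor
  · rintro ⟨L, r1, r2, hall, w0, hw0, hw0ne⟩
    obtain ⟨hr1, hr2⟩ := (chain_range_iff 1 v L).mp ⟨r1, r2⟩
    norm_num at hr1 hr2
    have hpL : parentN L = v := by show (L - 1) / 2 = v; omega
    funext j
    by_cases hj : j = ⟨v, hv⟩
    · subst hj
      have hw0v : w0 = ⟨v, hv⟩ := Fin.ext (by rw [hw0, hpL])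
      rw [hw0v] at hw0ne
      rcases zmod2_cases (α ⟨v, hv⟩) with h | h
      · exact absurd h hw0ne
      · rw [h]; simp [delta]
    · rw [show delta ⟨v, hv⟩ j = 0 from by simp [delta, hj]]
      by_contra hc
      obtain ⟨j', hj'1, hj'2, hj'w⟩ := hall j hc
      have : j' = 1 := by omega
      subst this
      rw [Function.iterate_one, hpL] at hj'w
      exact hj (Fin.ext hj'w.symm)
  · rintro rfl
    refine ⟨2 * v + 1, by norm_num; omega, by norm_num; omega, ?_, ⟨v, hv⟩, ?_, ?_⟩
    · intro w hw
      have hwv : w = ⟨v, hv⟩ := by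
        by_contra hne
        exact hw (by simp [delta, hne])
      refine ⟨1, le_rfl, le_rfl, ?_⟩
      rw [Function.iterate_one, hwv]
      show (2 * v + 1 - 1) / 2 = v; omega
    · show v = (2 * v + 1 - 1) / 2; omega
    · simp [delta]

lemma anc_unique {k j v L : ℕ} (h1 : 2 ^ (k + 1) * (v + 1) ≤ L + 1)
    (h2 : L + 1 < 2 ^ (k + 1) * (v + 2)) (hj : 1 ≤ j) (hjk : j ≤ k + 1)
    (hw : parentN^[j] L = v) : j = k + 1 := by
  by_contra hne
  have hjk' : j ≤ k + 1 := hjk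
  obtain ⟨ha, -, -⟩ := anc_range h1 h2 hjk' hw
  have hp : 2 ≤ 2 ^ (k + 1 - j) := by
    calc (2 : ℕ) = 2 ^ 1 := by norm_num
    _ ≤ 2 ^ (k + 1 - j) := Nat.pow_le_pow_right (by norm_num) (by omega)
  nlinarith

lemma leaf_child {k v L : ℕ} (h1 : 2 ^ (k + 1) * (v + 1) ≤ L + 1)
    (h2 : L + 1 < 2 ^ (k + 1) * (v + 2)) :
    ∃ c, (c = 2 * v + 1 ∨ c = 2 * v + 2) ∧ parentN^[k] L = c ∧
      2 ^ k * (c + 1) ≤ L + 1 ∧ L + 1 < 2 ^ k * (c + 2) ∧ parentN^[k + 1] L = v := by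
  have hq1 : 2 * (v + 1) ≤ (L + 1) / 2 ^ k := by
    rw [Nat.le_div_iff_mul_le (pow2_pos k)]
    calc 2 * (v + 1) * 2 ^ k = 2 ^ (k + 1) * (v + 1) := by ring
    _ ≤ L + 1 := h1
  have hq2 : (L + 1) / 2 ^ k < 2 * (v + 2) := by
    rw [Nat.div_lt_iff_lt_mul (pow2_pos k)]
    calc L + 1 < 2 ^ (k + 1) * (v + 2) := h2
    _ = 2 * (v + 2) * 2 ^ k := by ring
  set q := (L + 1) / 2 ^ k with hqdef
  refine ⟨q - 1, by omega, ?_, ?_, ?_, ?_⟩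
  · rw [parentN_iter]
  · have : 2 ^ k * q ≤ L + 1 := by
      rw [Nat.mul_comm]; exact Nat.div_mul_le_self _ _
    have hq : q - 1 + 1 = q := by omega
    rw [hq]; exact this
  · have : (L + 1) / 2 ^ k < q + 1 := by omega
    rw [Nat.div_lt_iff_lt_mul (pow2_pos k)] at this
    have hq : q - 1 + 2 = q + 1 := by omega
    rw [hq, Nat.mul_comm]; exact this
  · rw [parentN_iter]
    have : (L + 1) / 2 ^ (k + 1) = (L + 1) / 2 ^ k / 2 := by
      rw [Nat.div_div_eq_div_mul, pow_succ]
    rw [this, ← hqdef]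
    omega

lemma two_le_pow {k : ℕ} (hk : 1 ≤ k) : 2 ≤ 2 ^ k := by
  calc (2 : ℕ) = 2 ^ 1 := by norm_num
  _ ≤ 2 ^ k := Nat.pow_le_pow_right (by norm_num) hk

lemma parentN_L_gt {k c L v : ℕ} (hk : 1 ≤ k) (hc : 2 * v + 1 ≤ c)
    (hb : 2 ^ k * (c + 1) ≤ L + 1) : v < parentN L := by
  have h2k : 2 ≤ 2 ^ k := two_le_pow hk
  have h1 : 2 * (c + 1) ≤ 2 ^ k * (c + 1) := Nat.mul_le_mul_right _ h2k
  show v < (L - 1) / 2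
  omega

lemma parentN_iter_k {k c L : ℕ} (hb1 : 2 ^ k * (c + 1) ≤ L + 1)
    (hb2 : L + 1 < 2 ^ k * (c + 2)) : parentN^[k] L = c := by
  rw [parentN_iter]
  have h : (L + 1) / 2 ^ k = c + 1 := by
    refine div_eq_of_between (pow2_pos k) hb1 ?_
    rw [show c + 1 + 1 = c + 2 from by omega]
    exact hb2
  omega

lemma alpha'_at_v {n : ℕ} {v : ℕ} (hv : v < n) {α : Fin n → ZMod 2} (hα : α ⟨v, hv⟩ = 1) :
    (α + delta ⟨v, hv⟩) ⟨v, hv⟩ = 0 := by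
  rw [delta_eq, hα]
  decide

lemma chain_step0 {n : ℕ} (k v : ℕ) (hk : 1 ≤ k) (hv : v < n) (α : Fin n → ZMod 2)
    (hα : α ⟨v, hv⟩ = 0) :
    chainCond (k + 1) v α ↔ chainCond k (2 * v + 1) α ∨ chainCond k (2 * v + 2) α := by
  constructor
  · rintro ⟨L, r1, r2, hall, w0, hw0, hw0ne⟩
    obtain ⟨hr1, hr2⟩ := (chain_range_iff (k + 1) v L).mp ⟨r1, r2⟩
    obtain ⟨c, hc, hpk, hb1, hb2, hpk1⟩ := leaf_child hr1 hr2
    have hcc : chainCond k c α := by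
      refine ⟨L, ((chain_range_iff k c L).mpr ⟨hb1, hb2⟩).1,
        ((chain_range_iff k c L).mpr ⟨hb1, hb2⟩).2, ?_, w0, hw0, hw0ne⟩
      intro w hw
      obtain ⟨j, hj1, hj2, hjw⟩ := hall w hw
      rcases Nat.lt_or_ge j (k + 1) with hj | hj
      · exact ⟨j, hj1, by omega, hjw⟩
      · exfalso
        have hjeq : j = k + 1 := by omega
        subst hjeq
        rw [hpk1] at hjw
        have : w = ⟨v, hv⟩ := Fin.ext hjw.symm
        rw [this] at hw
        exact hw hα
    rcases hc with rfl | rfl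
    · exact Or.inl hcc
    · exact Or.inr hcc
  · intro h
    have key : ∀ c, c = 2 * v + 1 ∨ c = 2 * v + 2 → chainCond k c α → chainCond (k + 1) v α := by
      rintro c hc ⟨L, r1, r2, hall, w0, hw0, hw0ne⟩
      obtain ⟨hb1, hb2⟩ := (chain_range_iff k c L).mp ⟨r1, r2⟩
      have hv1 : 2 ^ (k + 1) * (v + 1) ≤ L + 1 := by
        calc 2 ^ (k + 1) * (v + 1) = 2 ^ k * (2 * v + 2) := by ring
        _ ≤ 2 ^ k * (c + 1) := Nat.mul_le_mul_left _ (by omega)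
        _ ≤ L + 1 := hb1
      have hv2 : L + 1 < 2 ^ (k + 1) * (v + 2) := by
        calc L + 1 < 2 ^ k * (c + 2) := hb2
        _ ≤ 2 ^ k * (2 * v + 4) := Nat.mul_le_mul_left _ (by omega)
        _ = 2 ^ (k + 1) * (v + 2) := by ring
      refine ⟨L, ((chain_range_iff (k + 1) v L).mpr ⟨hv1, hv2⟩).1,
        ((chain_range_iff (k + 1) v L).mpr ⟨hv1, hv2⟩).2, ?_, w0, hw0, hw0ne⟩
      intro w hw
      obtain ⟨j, hj1, hj2, hjw⟩ := hall w hw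
      exact ⟨j, hj1, by omega, hjw⟩
    rcases h with h | h
    · exact key _ (Or.inl rfl) h
    · exact key _ (Or.inr rfl) h

lemma chain_step1 {n : ℕ} (k v : ℕ) (hk : 1 ≤ k) (hv : v < n) (α : Fin n → ZMod 2)
    (hα : α ⟨v, hv⟩ = 1) :
    chainCond (k + 1) v α ↔ chainCond k (2 * v + 1) (α + delta ⟨v, hv⟩)
      ∨ chainCond k (2 * v + 2) (α + delta ⟨v, hv⟩) := by
  set α' := α + delta ⟨v, hv⟩ with hα'def
  have hα'v : α' ⟨v, hv⟩ = 0 := alpha'_at_v hv hα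
  have hα'ne : ∀ w : Fin n, w ≠ ⟨v, hv⟩ → α' w = α w := fun w hw => delta_ne hw α
  constructor
  · rintro ⟨L, r1, r2, hall, w0, hw0, hw0ne⟩
    obtain ⟨hr1, hr2⟩ := (chain_range_iff (k + 1) v L).mp ⟨r1, r2⟩
    obtain ⟨c, hc, hpk, hb1, hb2, hpk1⟩ := leaf_child hr1 hr2
    have hw0v : w0 ≠ ⟨v, hv⟩ := by
      intro hcon
      have hgt : v < parentN L := parentN_L_gt hk (by omega) hb1
      rw [hcon] at hw0
      simp only [] at hw0
      omega
    have hcc : chainCond k c α' := by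
      refine ⟨L, ((chain_range_iff k c L).mpr ⟨hb1, hb2⟩).1,
        ((chain_range_iff k c L).mpr ⟨hb1, hb2⟩).2, ?_, w0, hw0, ?_⟩
      · intro w hw
        have hwne : w ≠ ⟨v, hv⟩ := by
          intro hcon; rw [hcon] at hw; exact hw hα'v
        rw [hα'ne w hwne] at hw
        obtain ⟨j, hj1, hj2, hjw⟩ := hall w hw
        rcases Nat.lt_or_ge j (k + 1) with hj | hj
        · exact ⟨j, hj1, by omega, hjw⟩
        · exfalso
          have hjeq : j = k + 1 := by omega
          subst hjeq
          rw [hpk1] at hjw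
          exact hwne (Fin.ext hjw.symm)
      · rw [hα'ne w0 hw0v]
        exact hw0ne
    rcases hc with rfl | rfl
    · exact Or.inl hcc
    · exact Or.inr hcc
  · intro h
    have key : ∀ c, c = 2 * v + 1 ∨ c = 2 * v + 2 → chainCond k c α' → chainCond (k + 1) v α := by
      rintro c hc ⟨L, r1, r2, hall, w0, hw0, hw0ne⟩
      obtain ⟨hb1, hb2⟩ := (chain_range_iff k c L).mp ⟨r1, r2⟩
      have hpk : parentN^[k] L = c := parentN_iter_k hb1 hb2
      have hpk1 : parentN^[k + 1] L = v := by
        rw [Function.iterate_succ_apply', hpk]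
        show (c - 1) / 2 = v
        omega
      have hv1 : 2 ^ (k + 1) * (v + 1) ≤ L + 1 := by
        calc 2 ^ (k + 1) * (v + 1) = 2 ^ k * (2 * v + 2) := by ring
        _ ≤ 2 ^ k * (c + 1) := Nat.mul_le_mul_left _ (by omega)
        _ ≤ L + 1 := hb1
      have hv2 : L + 1 < 2 ^ (k + 1) * (v + 2) := by
        calc L + 1 < 2 ^ k * (c + 2) := hb2
        _ ≤ 2 ^ k * (2 * v + 4) := Nat.mul_le_mul_left _ (by omega)
        _ = 2 ^ (k + 1) * (v + 2) := by ring
      have hw0v : w0 ≠ ⟨v, hv⟩ := by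
        intro hcon
        have hgt : v < parentN L := parentN_L_gt hk (by omega) hb1
        rw [hcon] at hw0
        simp only [] at hw0
        omega
      refine ⟨L, ((chain_range_iff (k + 1) v L).mpr ⟨hv1, hv2⟩).1,
        ((chain_range_iff (k + 1) v L).mpr ⟨hv1, hv2⟩).2, ?_, w0, hw0, ?_⟩
      · intro w hw
        by_cases hwv : w = ⟨v, hv⟩
        · exact ⟨k + 1, by omega, le_rfl, by rw [hpk1, hwv]⟩
        · rw [← hα'ne w hwv] at hw
          obtain ⟨j, hj1, hj2, hjw⟩ := hall w hw
          exact ⟨j, hj1, by omega, hjw⟩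
      · rw [← hα'ne w0 hw0v]
        exact hw0ne
    rcases h with h | h
    · exact key _ (Or.inl rfl) h
    · exact key _ (Or.inr rfl) h

lemma SS_shift_zero {n : ℕ} (g : (Fin n → ZMod 2) → ℝ) (α : Fin n → ZMod 2) (i : Fin n)
    (hi : α i ≠ 0) (hg : ∀ x, g (x + delta i) = g x) : SS g α = 0 :=
  sum_shift_zero g α i hi hg

lemma SS_G_zero {n : ℕ} (k u : ℕ) (i : Fin n) (hiu : (i : ℕ) < u) (β : Fin n → ZMod 2)
    (hi : β i ≠ 0) : SS (G k u) β = 0 :=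
  SS_shift_zero _ _ i hi (G_shift k u i hiu)

theorem main_ind (d : ℕ) : ∀ k, 1 ≤ k → ∀ v, 2 ^ k * (v + 2) ≤ 2 ^ (d + 1) →
    ∀ α : Fin (2 ^ d - 1) → ZMod 2, (SS (G k v) α ≠ 0 ↔ chainCond k v α) := by
  intro k
  induction k with
  | zero => omega
  | succ k ih =>
    intro hk1 v hvb α
    rcases Nat.eq_zero_or_pos k with rfl | hk
    · -- base case k+1 = 1
      have h2d : 2 ^ (d + 1) = 2 * 2 ^ d := by ring
      have h21 : (2 : ℕ) ^ (0 + 1) = 2 := by norm_num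
      have hv : v < 2 ^ d - 1 := by rw [h21] at hvb; omega
      rw [chain_base v hv α]
      by_cases hα : α = delta ⟨v, hv⟩
      · subst hα
        have := SS_G_one_delta v hv
        constructor
        · intro _; rfl
        · intro _
          rw [show (0 + 1 : ℕ) = 1 from rfl, this]
          have : (0 : ℝ) < 2 ^ (2 ^ d - 1) := by positivity
          intro hc
          rw [neg_eq_zero] at hc
          linarith
      · rw [show (0 + 1 : ℕ) = 1 from rfl, SS_G_one_ne v hv α hα]
        simp [hα]
    · -- inductive step
      have h4 : 4 ≤ 2 ^ (k + 1) := by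
        calc (4 : ℕ) = 2 ^ 2 := by norm_num
        _ ≤ 2 ^ (k + 1) := Nat.pow_le_pow_right (by norm_num) (by omega)
      have hmul : 4 * (v + 2) ≤ 2 ^ (k + 1) * (v + 2) := Nat.mul_le_mul_right _ h4
      have h2d : 2 ^ (d + 1) = 2 * 2 ^ d := by ring
      have hv : v < 2 ^ d - 1 := by omega
      have hbL : 2 ^ k * (2 * v + 1 + 2) ≤ 2 ^ (d + 1) := by
        calc 2 ^ k * (2 * v + 1 + 2) ≤ 2 ^ k * (2 * v + 4) := Nat.mul_le_mul_left _ (by omega)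
        _ = 2 ^ (k + 1) * (v + 2) := by ring
        _ ≤ 2 ^ (d + 1) := hvb
      have hbR : 2 ^ k * (2 * v + 2 + 2) ≤ 2 ^ (d + 1) := by
        calc 2 ^ k * (2 * v + 2 + 2) = 2 ^ (k + 1) * (v + 2) := by ring
        _ ≤ 2 ^ (d + 1) := hvb
      set α' := α + delta ⟨v, hv⟩ with hα'def
      have ihL := ih hk (2 * v + 1) hbL α
      have ihR := ih hk (2 * v + 2) hbR α
      have ihL' := ih hk (2 * v + 1) hbL α'
      have ihR' := ih hk (2 * v + 2) hbR α'
      rw [SS_G_succ k v hv α, ← hα'def]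
      rcases zmod2_cases (α ⟨v, hv⟩) with h0 | h1
      · -- α_v = 0
        have hα'v : α' ⟨v, hv⟩ ≠ 0 := by
          rw [hα'def, delta_eq, h0, zero_add]
          decide
        have hz1 : SS (G k (2 * v + 1)) α' = 0 := SS_G_zero k _ ⟨v, hv⟩ (by show v < _; omega) α' hα'v
        have hz2 : SS (G k (2 * v + 2)) α' = 0 := SS_G_zero k _ ⟨v, hv⟩ (by show v < _; omega) α' hα'v
        rw [hz1, hz2, chain_step0 k v hk hv α h0]
        constructor
        · intro h
          by_contra hc
          push_neg at hc
          have hL0 : SS (G k (2 * v + 1)) α = 0 := by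
            by_contra hne; exact hc.1 (ihL.mp hne)
          have hR0 : SS (G k (2 * v + 2)) α = 0 := by
            by_contra hne; exact hc.2 (ihR.mp hne)
          rw [hL0, hR0] at h
          norm_num at h
        · rintro (hC | hC)
          · have hLne : SS (G k (2 * v + 1)) α ≠ 0 := ihL.mpr hC
            have hR0 : SS (G k (2 * v + 2)) α = 0 := by
              by_contra hne
              exact chain_disjoint hC (ihR.mp hne)
            rw [hR0]
            intro hc
            apply hLne
            field_simp at hc
            linarith
          · have hRne : SS (G k (2 * v + 2)) α ≠ 0 := ihR.mpr hC
            have hL0 : SS (G k (2 * v + 1)) α = 0 := by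
              by_contra hne
              exact chain_disjoint (ihL.mp hne) hC
            rw [hL0]
            intro hc
            apply hRne
            field_simp at hc
            linarith
      · -- α_v = 1
        have hz1 : SS (G k (2 * v + 1)) α = 0 := SS_G_zero k _ ⟨v, hv⟩ (by show v < _; omega) α (by rw [h1]; decide)
        have hz2 : SS (G k (2 * v + 2)) α = 0 := SS_G_zero k _ ⟨v, hv⟩ (by show v < _; omega) α (by rw [h1]; decide)
        rw [hz1, hz2, chain_step1 k v hk hv α h1, ← hα'def]
        constructor
        · intro h
          by_contra hc
          push_neg at hc
          have hL0 : SS (G k (2 * v + 1)) α' = 0 := by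
            by_contra hne; exact hc.1 (ihL'.mp hne)
          have hR0 : SS (G k (2 * v + 2)) α' = 0 := by
            by_contra hne; exact hc.2 (ihR'.mp hne)
          rw [hL0, hR0] at h
          norm_num at h
        · rintro (hC | hC)
          · have hLne : SS (G k (2 * v + 1)) α' ≠ 0 := ihL'.mpr hC
            have hR0 : SS (G k (2 * v + 2)) α' = 0 := by
              by_contra hne
              exact chain_disjoint hC (ihR'.mp hne)
            rw [hR0]
            intro hc
            apply hLne
            field_simp at hc
            linarith
          · have hRne : SS (G k (2 * v + 2)) α' ≠ 0 := ihR'.mpr hC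
            have hL0 : SS (G k (2 * v + 1)) α' = 0 := by
              by_contra hne
              exact chain_disjoint (ihL'.mp hne) hC
            rw [hL0]
            intro hc
            apply hRne
            field_simp at hc
            linarith

lemma chain_top (d : ℕ) (α : Fin (2 ^ d - 1) → ZMod 2) : chainCond d 0 α ↔ inSupp d α := by
  have h1 : 2 ^ d * (0 + 1) = 2 ^ d := by ring
  have h2 : 2 ^ d * (0 + 2) = 2 ^ (d + 1) := by rw [pow_succ]
  unfold chainCond inSupp
  constructor <;> rintro ⟨L, r1, r2, r3, r4⟩ <;> exact ⟨L, by omega, by omega, r3, r4⟩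


theorem stmt15 (d : ℕ) (hd : 1 ≤ d) :
    ∀ α : Fin (2 ^ d - 1) → ZMod 2, fhat (treeFun d) α ≠ 0 ↔ inSupp d α := by
  intro α
  have hfh : fhat (treeFun d) α = SS (G d 0) α / 2 ^ (2 ^ d - 1) := rfl
  rw [hfh, ← chain_top d α, ← main_ind d d hd 0 (le_of_eq (by rw [pow_succ])) α]
  constructor
  · intro h hc
    apply h
    rw [hc, zero_div]
  · intro h hc
    apply h
    have h2 : (0 : ℝ) < 2 ^ (2 ^ d - 1) := by positivity
    field_simp at hc
    simpa using hc
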